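/- Suppose a function-valued 2×2 matrix L(λ) satisfies the Sklyanin quadratic Poisson algebra {L_a(λ), L_b(μ)} = [r(λ−μ), L_a(λ)L_b(μ)] with a skew-symmetric r-matrix, and k⁺, k⁻ are constant matrices Poisson-commuting with L and satisfying the classical reflection equations. Then the double-row transfer matrix 𝔟(λ) = tr(k⁺(λ) L(λ) k⁻(λ) L(−λ)⁻¹) satisfies {𝔟(λ), 𝔟(μ)} = 0. -/

import Mathlib

open Matrix Kronecker

section

variable {A : Type*} [CommRing A]

/-- Entrywise Poisson bracket of two 2×2 matrices in auxiliary-space notation: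
    {X_a, Y_b} = Σ {X_ij, Y_kl} E_ij ⊗ E_kl. -/
def matPB (pb : A → A → A) (X Y : Matrix (Fin 2) (Fin 2) A) :
    Matrix (Fin 2 × Fin 2) (Fin 2 × Fin 2) A :=
  fun ik jl => pb (X ik.1 jl.1) (Y ik.2 jl.2)

/-- The permutation operator on the two auxiliary spaces. -/
def PswapA : Matrix (Fin 2 × Fin 2) (Fin 2 × Fin 2) A :=
  fun ij kl => if ij.1 = kl.2 ∧ ij.2 = kl.1 then 1 else 0

/-- Embedding of an operator on the two auxiliary spaces into factors 1,2 of a triple product. -/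
def emb12 (M : Matrix (Fin 2 × Fin 2) (Fin 2 × Fin 2) A) :
    Matrix (Fin 2 × Fin 2 × Fin 2) (Fin 2 × Fin 2 × Fin 2) A :=
  fun i j => M (i.1, i.2.1) (j.1, j.2.1) * (if i.2.2 = j.2.2 then 1 else 0)

def emb13 (M : Matrix (Fin 2 × Fin 2) (Fin 2 × Fin 2) A) :
    Matrix (Fin 2 × Fin 2 × Fin 2) (Fin 2 × Fin 2 × Fin 2) A :=
  fun i j => M (i.1, i.2.2) (j.1, j.2.2) * (if i.2.1 = j.2.1 then 1 else 0)

def emb23 (M : Matrix (Fin 2 × Fin 2) (Fin 2 × Fin 2) A) :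
    Matrix (Fin 2 × Fin 2 × Fin 2) (Fin 2 × Fin 2 × Fin 2) A :=
  fun i j => M (i.2.1, i.2.2) (j.2.1, j.2.2) * (if i.1 = j.1 then 1 else 0)

variable (pb : A → A → A)

lemma drt_pb_zero_left (hal : ∀ a b c : A, pb (a + b) c = pb a c + pb b c) (b : A) :
    pb 0 b = 0 := by
  have h := hal 0 0 b
  rw [add_zero] at h
  exact (add_eq_left).mp h.symm

lemma drt_pb_zero_right (har : ∀ a b c : A, pb a (b + c) = pb a b + pb a c) (a : A) :
    pb a 0 = 0 := by
  have h := har a 0 0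
  rw [add_zero] at h
  exact (add_eq_left).mp h.symm

lemma drt_pb_one_left (hll : ∀ a b c : A, pb (a * b) c = pb a c * b + a * pb b c) (b : A) :
    pb 1 b = 0 := by
  have h := hll 1 1 b
  rw [mul_one, mul_one, one_mul] at h
  exact (add_eq_left).mp h.symm

lemma drt_pb_one_right (hlr : ∀ a b c : A, pb a (b * c) = pb a b * c + b * pb a c) (a : A) :
    pb a 1 = 0 := by
  have h := hlr a 1 1
  rw [mul_one, mul_one, one_mul] at h
  exact (add_eq_left).mp h.symm

lemma drt_pb_sum_left (hal : ∀ a b c : A, pb (a + b) c = pb a c + pb b c)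
    {ι : Type*} (s : Finset ι) (f : ι → A) (b : A) :
    pb (∑ i ∈ s, f i) b = ∑ i ∈ s, pb (f i) b := by
  classical
  induction s using Finset.induction_on with
  | empty => simpa using drt_pb_zero_left pb hal b
  | insert _ _ ha ih => rw [Finset.sum_insert ha, Finset.sum_insert ha, hal, ih]

lemma drt_pb_sum_right (har : ∀ a b c : A, pb a (b + c) = pb a b + pb a c)
    {ι : Type*} (s : Finset ι) (f : ι → A) (a : A) :
    pb a (∑ i ∈ s, f i) = ∑ i ∈ s, pb a (f i) := by
  classical
  induction s using Finset.induction_on with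
  | empty => simpa using drt_pb_zero_right pb har a
  | insert _ _ ha ih => rw [Finset.sum_insert ha, Finset.sum_insert ha, har, ih]

lemma drt_matPB_mul_left
    (hal : ∀ a b c : A, pb (a + b) c = pb a c + pb b c)
    (hll : ∀ a b c : A, pb (a * b) c = pb a c * b + a * pb b c)
    (X Y Z : Matrix (Fin 2) (Fin 2) A) :
    matPB pb (X * Y) Z
      = (X ⊗ₖ (1 : Matrix (Fin 2) (Fin 2) A)) * matPB pb Y Z
        + matPB pb X Z * (Y ⊗ₖ (1 : Matrix (Fin 2) (Fin 2) A)) := by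
  ext ⟨i, k⟩ ⟨j, l⟩
  simp only [matPB, Matrix.add_apply, Matrix.mul_apply, Fintype.sum_prod_type,
    Matrix.kroneckerMap_apply, Matrix.one_apply]
  rw [drt_pb_sum_left pb hal]
  simp only [hll]
  rw [Finset.sum_add_distrib, add_comm]
  congr 1 <;>
    simp [mul_ite, ite_mul, mul_one, mul_zero, zero_mul, one_mul]

lemma drt_matPB_mul_right
    (har : ∀ a b c : A, pb a (b + c) = pb a b + pb a c)
    (hlr : ∀ a b c : A, pb a (b * c) = pb a b * c + b * pb a c)
    (X Y Z : Matrix (Fin 2) (Fin 2) A) :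
    matPB pb X (Y * Z)
      = ((1 : Matrix (Fin 2) (Fin 2) A) ⊗ₖ Y) * matPB pb X Z
        + matPB pb X Y * ((1 : Matrix (Fin 2) (Fin 2) A) ⊗ₖ Z) := by
  ext ⟨i, k⟩ ⟨j, l⟩
  simp only [matPB, Matrix.add_apply, Matrix.mul_apply, Fintype.sum_prod_type,
    Matrix.kroneckerMap_apply, Matrix.one_apply]
  rw [drt_pb_sum_right pb har]
  simp only [hlr]
  rw [Finset.sum_add_distrib, add_comm]
  congr 1 <;>
    simp [mul_ite, ite_mul, mul_one, mul_zero, zero_mul, one_mul]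

lemma drt_matPB_one_left
    (hal : ∀ a b c : A, pb (a + b) c = pb a c + pb b c)
    (hll : ∀ a b c : A, pb (a * b) c = pb a c * b + a * pb b c)
    (Z : Matrix (Fin 2) (Fin 2) A) :
    matPB pb (1 : Matrix (Fin 2) (Fin 2) A) Z = 0 := by
  ext ⟨i, k⟩ ⟨j, l⟩
  simp only [matPB, Matrix.one_apply, Matrix.zero_apply]
  split
  · exact drt_pb_one_left pb hll _
  · exact drt_pb_zero_left pb hal _

lemma drt_matPB_one_right
    (har : ∀ a b c : A, pb a (b + c) = pb a b + pb a c)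
    (hlr : ∀ a b c : A, pb a (b * c) = pb a b * c + b * pb a c)
    (Z : Matrix (Fin 2) (Fin 2) A) :
    matPB pb Z (1 : Matrix (Fin 2) (Fin 2) A) = 0 := by
  ext ⟨i, k⟩ ⟨j, l⟩
  simp only [matPB, Matrix.one_apply, Matrix.zero_apply]
  split
  · exact drt_pb_one_right pb hlr _
  · exact drt_pb_zero_right pb har _

lemma drt_pb_trace
    (hal : ∀ a b c : A, pb (a + b) c = pb a c + pb b c)
    (har : ∀ a b c : A, pb a (b + c) = pb a b + pb a c)
    (X Y : Matrix (Fin 2) (Fin 2) A) :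
    pb X.trace Y.trace = (matPB pb X Y).trace := by
  simp only [Matrix.trace, Matrix.diag, matPB, Fintype.sum_prod_type]
  rw [drt_pb_sum_left pb hal]
  exact Finset.sum_congr rfl fun i _ => drt_pb_sum_right pb har _ _ _

lemma drt_matPB_inv_left
    (hal : ∀ a b c : A, pb (a + b) c = pb a c + pb b c)
    (hll : ∀ a b c : A, pb (a * b) c = pb a c * b + a * pb b c)
    (Lx Li : Matrix (Fin 2) (Fin 2) A) (h1 : Lx * Li = 1) (h2 : Li * Lx = 1)
    (Z : Matrix (Fin 2) (Fin 2) A) :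
    matPB pb Li Z
      = -((Li ⊗ₖ (1 : Matrix (Fin 2) (Fin 2) A)) * matPB pb Lx Z
          * (Li ⊗ₖ (1 : Matrix (Fin 2) (Fin 2) A))) := by
  have h := drt_matPB_mul_left pb hal hll Lx Li Z
  rw [h1, drt_matPB_one_left pb hal hll] at h
  have h3 := congrArg (fun M => (Li ⊗ₖ (1 : Matrix (Fin 2) (Fin 2) A)) * M) h.symm
  simp only [Matrix.mul_add, Matrix.mul_zero, ← Matrix.mul_assoc,
    ← Matrix.mul_kronecker_mul, h2, Matrix.one_mul, Matrix.mul_one,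
    Matrix.one_kronecker_one] at h3
  exact eq_neg_of_add_eq_zero_left h3


lemma drt_matPB_inv_right
    (har : ∀ a b c : A, pb a (b + c) = pb a b + pb a c)
    (hlr : ∀ a b c : A, pb a (b * c) = pb a b * c + b * pb a c)
    (Lx Li : Matrix (Fin 2) (Fin 2) A) (h1 : Lx * Li = 1) (h2 : Li * Lx = 1)
    (Z : Matrix (Fin 2) (Fin 2) A) :
    matPB pb Z Li
      = -(((1 : Matrix (Fin 2) (Fin 2) A) ⊗ₖ Li) * matPB pb Z Lx
          * ((1 : Matrix (Fin 2) (Fin 2) A) ⊗ₖ Li)) := by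
  have h := drt_matPB_mul_right pb har hlr Z Lx Li
  rw [h1, drt_matPB_one_right pb har hlr] at h
  have h3 := congrArg (fun M => ((1 : Matrix (Fin 2) (Fin 2) A) ⊗ₖ Li) * M) h.symm
  simp only [Matrix.mul_add, Matrix.mul_zero, ← Matrix.mul_assoc,
    ← Matrix.mul_kronecker_mul, h2, Matrix.one_mul, Matrix.mul_one,
    Matrix.one_kronecker_one] at h3
  exact eq_neg_of_add_eq_zero_left h3

lemma drt_matPB_symm_zero
    (hanti : ∀ a b : A, pb a b = - pb b a)
    (X Y : Matrix (Fin 2) (Fin 2) A) (h : matPB pb X Y = 0) :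
    matPB pb Y X = 0 := by
  ext ⟨i, k⟩ ⟨j, l⟩
  have h2 := congrFun (congrFun h (k, i)) (l, j)
  simp only [matPB, Matrix.zero_apply] at h2 ⊢
  rw [hanti, h2, neg_zero]

lemma drt_Pswap_sq : (PswapA : Matrix (Fin 2 × Fin 2) (Fin 2 × Fin 2) A) * PswapA = 1 := by
  ext ⟨i, j⟩ ⟨k, l⟩
  simp only [PswapA, Matrix.mul_apply, Matrix.one_apply, Fintype.sum_prod_type, ite_and,
    ite_mul, one_mul, zero_mul, Prod.mk.injEq]
  simp [Finset.sum_ite_eq, Finset.sum_ite_eq', eq_comm, and_comm]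
  split <;> split <;> simp_all

lemma drt_skew_conj (r : ℝ → Matrix (Fin 2 × Fin 2) (Fin 2 × Fin 2) A)
    (hskew : ∀ l : ℝ, r l = - (PswapA * r (-l) * PswapA)) (x y : ℝ) (hy : y = -x) :
    PswapA * r x * PswapA = - r y := by
  subst hy
  rw [hskew x]
  rw [show (PswapA : Matrix (Fin 2 × Fin 2) (Fin 2 × Fin 2) A) * -(PswapA * r (-x) * PswapA) * PswapA
      = -((PswapA * PswapA) * r (-x) * (PswapA * PswapA)) by noncomm_ring]
  rw [drt_Pswap_sq, Matrix.one_mul, Matrix.mul_one]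

lemma drt_kron_mul_assoc {B C D E : Matrix (Fin 2) (Fin 2) A}
    (M : Matrix (Fin 2 × Fin 2) (Fin 2 × Fin 2) A) :
    (B ⊗ₖ C) * ((D ⊗ₖ E) * M) = ((B * D) ⊗ₖ (C * E)) * M := by
  rw [← Matrix.mul_assoc, ← Matrix.mul_kronecker_mul]

theorem drt_core
    (pb : A → A → A)
    (hal : ∀ a b c : A, pb (a + b) c = pb a c + pb b c)
    (har : ∀ a b c : A, pb a (b + c) = pb a b + pb a c)
    (hll : ∀ a b c : A, pb (a * b) c = pb a c * b + a * pb b c)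
    (hlr : ∀ a b c : A, pb a (b * c) = pb a b * c + b * pb a c)
    (hanti : ∀ a b : A, pb a b = - pb b a)
    (r : ℝ → Matrix (Fin 2 × Fin 2) (Fin 2 × Fin 2) A)
    (hskew : ∀ l : ℝ, r l = - (PswapA * r (-l) * PswapA))
    (L Linv : ℝ → Matrix (Fin 2) (Fin 2) A)
    (hinv : ∀ l, L l * Linv l = 1 ∧ Linv l * L l = 1)
    (hSk : ∀ l m : ℝ, matPB pb (L l) (L m)
        = r (l - m) * ((L l ⊗ₖ (1 : Matrix (Fin 2) (Fin 2) A))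
            * ((1 : Matrix (Fin 2) (Fin 2) A) ⊗ₖ L m))
          - ((L l ⊗ₖ (1 : Matrix (Fin 2) (Fin 2) A))
            * ((1 : Matrix (Fin 2) (Fin 2) A) ⊗ₖ L m)) * r (l - m))
    (kp km : ℝ → Matrix (Fin 2) (Fin 2) A)
    (hkmkm : ∀ l m : ℝ, matPB pb (km l) (km m) = 0)
    (hkpkp : ∀ l m : ℝ, matPB pb (kp l) (kp m) = 0)
    (hkmkp : ∀ l m : ℝ, matPB pb (km l) (kp m) = 0)
    (hkmL : ∀ l m : ℝ, matPB pb (km l) (L m) = 0)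
    (hkpL : ∀ l m : ℝ, matPB pb (kp l) (L m) = 0)
    (hreflm : ∀ l m : ℝ,
      r (l - m) * (km l ⊗ₖ (1 : Matrix (Fin 2) (Fin 2) A))
          * ((1 : Matrix (Fin 2) (Fin 2) A) ⊗ₖ km m)
      - (km l ⊗ₖ (1 : Matrix (Fin 2) (Fin 2) A))
          * ((1 : Matrix (Fin 2) (Fin 2) A) ⊗ₖ km m) * (PswapA * r (l - m) * PswapA)
      + (km l ⊗ₖ (1 : Matrix (Fin 2) (Fin 2) A)) * (PswapA * r (l + m) * PswapA)
          * ((1 : Matrix (Fin 2) (Fin 2) A) ⊗ₖ km m)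
      - ((1 : Matrix (Fin 2) (Fin 2) A) ⊗ₖ km m) * r (l + m)
          * (km l ⊗ₖ (1 : Matrix (Fin 2) (Fin 2) A)) = 0)
    (l m : ℝ) :
      matPB pb (kp l * (L l * (km l * Linv (-l)))) (kp m * (L m * (km m * Linv (-m))))
        = (kp l ⊗ₖ (1 : Matrix (Fin 2) (Fin 2) A)) *
            (((1 : Matrix (Fin 2) (Fin 2) A) ⊗ₖ kp m) *
              (r (l - m) * (((L l * (km l * Linv (-l))) ⊗ₖ (1 : Matrix (Fin 2) (Fin 2) A))
                  * ((1 : Matrix (Fin 2) (Fin 2) A) ⊗ₖ (L m * (km m * Linv (-m)))))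
               + (((L l * (km l * Linv (-l))) ⊗ₖ (1 : Matrix (Fin 2) (Fin 2) A))
                  * ((1 : Matrix (Fin 2) (Fin 2) A) ⊗ₖ (L m * (km m * Linv (-m))))) * r (m - l)
               - ((L l * (km l * Linv (-l))) ⊗ₖ (1 : Matrix (Fin 2) (Fin 2) A))
                  * (r (-l - m) * ((1 : Matrix (Fin 2) (Fin 2) A) ⊗ₖ (L m * (km m * Linv (-m)))))
               - ((1 : Matrix (Fin 2) (Fin 2) A) ⊗ₖ (L m * (km m * Linv (-m))))
                  * (r (l + m) * ((L l * (km l * Linv (-l))) ⊗ₖ (1 : Matrix (Fin 2) (Fin 2) A))))) := by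
  have hc1 : PswapA * r (l - m) * PswapA = - r (m - l) :=
    drt_skew_conj r hskew (l - m) (m - l) (by ring)
  have hc2 : PswapA * r (l + m) * PswapA = - r (-l - m) :=
    drt_skew_conj r hskew (l + m) (-l - m) (by ring)
  have hl1 := (hinv (-l)).1
  have hl2 := (hinv (-l)).2
  have hm1 := (hinv (-m)).1
  have hm2 := (hinv (-m)).2
  have hIL : ∀ Z, matPB pb (Linv (-l)) Z
      = -((Linv (-l) ⊗ₖ (1 : Matrix (Fin 2) (Fin 2) A)) * matPB pb (L (-l)) Z
          * (Linv (-l) ⊗ₖ (1 : Matrix (Fin 2) (Fin 2) A))) :=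
    fun Z => drt_matPB_inv_left pb hal hll (L (-l)) (Linv (-l)) hl1 hl2 Z
  have hIR : ∀ Z, matPB pb Z (Linv (-m))
      = -(((1 : Matrix (Fin 2) (Fin 2) A) ⊗ₖ Linv (-m)) * matPB pb Z (L (-m))
          * ((1 : Matrix (Fin 2) (Fin 2) A) ⊗ₖ Linv (-m))) :=
    fun Z => drt_matPB_inv_right pb har hlr (L (-m)) (Linv (-m)) hm1 hm2 Z
  have z1 : matPB pb (kp l) (kp m) = 0 := hkpkp l m
  have z2 : matPB pb (kp l) (L m) = 0 := hkpL l m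
  have z3 : matPB pb (kp l) (L (-m)) = 0 := hkpL l (-m)
  have z4 : matPB pb (kp l) (km m) = 0 := drt_matPB_symm_zero pb hanti _ _ (hkmkp m l)
  have z5 : matPB pb (km l) (kp m) = 0 := hkmkp l m
  have z6 : matPB pb (km l) (L m) = 0 := hkmL l m
  have z7 : matPB pb (km l) (L (-m)) = 0 := hkmL l (-m)
  have z8 : matPB pb (km l) (km m) = 0 := hkmkm l m
  have z9 : matPB pb (L l) (kp m) = 0 := drt_matPB_symm_zero pb hanti _ _ (hkpL m l)
  have z10 : matPB pb (L l) (km m) = 0 := drt_matPB_symm_zero pb hanti _ _ (hkmL m l)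
  have z11 : matPB pb (L (-l)) (kp m) = 0 := drt_matPB_symm_zero pb hanti _ _ (hkpL m (-l))
  have z12 : matPB pb (L (-l)) (km m) = 0 := drt_matPB_symm_zero pb hanti _ _ (hkmL m (-l))
  have hS1 := hSk l m
  have hS2 : matPB pb (L l) (L (-m))
      = r (l + m) * ((L l ⊗ₖ (1 : Matrix (Fin 2) (Fin 2) A))
          * ((1 : Matrix (Fin 2) (Fin 2) A) ⊗ₖ L (-m)))
        - ((L l ⊗ₖ (1 : Matrix (Fin 2) (Fin 2) A))
          * ((1 : Matrix (Fin 2) (Fin 2) A) ⊗ₖ L (-m))) * r (l + m) := by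
    have h := hSk l (-m); rwa [show l - -m = l + m by ring] at h
  have hS3 : matPB pb (L (-l)) (L m)
      = r (-l - m) * ((L (-l) ⊗ₖ (1 : Matrix (Fin 2) (Fin 2) A))
          * ((1 : Matrix (Fin 2) (Fin 2) A) ⊗ₖ L m))
        - ((L (-l) ⊗ₖ (1 : Matrix (Fin 2) (Fin 2) A))
          * ((1 : Matrix (Fin 2) (Fin 2) A) ⊗ₖ L m)) * r (-l - m) := by
    have h := hSk (-l) m; rwa [show -l - m = -l - m by ring] at h
  have hS4 : matPB pb (L (-l)) (L (-m))
      = r (m - l) * ((L (-l) ⊗ₖ (1 : Matrix (Fin 2) (Fin 2) A))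
          * ((1 : Matrix (Fin 2) (Fin 2) A) ⊗ₖ L (-m)))
        - ((L (-l) ⊗ₖ (1 : Matrix (Fin 2) (Fin 2) A))
          * ((1 : Matrix (Fin 2) (Fin 2) A) ⊗ₖ L (-m))) * r (m - l) := by
    have h := hSk (-l) (-m); rwa [show -l - -m = m - l by ring] at h
  have hW : r (l - m) * ((km l ⊗ₖ (1 : Matrix (Fin 2) (Fin 2) A))
          * ((1 : Matrix (Fin 2) (Fin 2) A) ⊗ₖ km m))
      + ((km l ⊗ₖ (1 : Matrix (Fin 2) (Fin 2) A))
          * ((1 : Matrix (Fin 2) (Fin 2) A) ⊗ₖ km m)) * r (m - l)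
      - (km l ⊗ₖ (1 : Matrix (Fin 2) (Fin 2) A))
          * (r (-l - m) * ((1 : Matrix (Fin 2) (Fin 2) A) ⊗ₖ km m))
      - ((1 : Matrix (Fin 2) (Fin 2) A) ⊗ₖ km m)
          * (r (l + m) * (km l ⊗ₖ (1 : Matrix (Fin 2) (Fin 2) A))) = 0 := by
    have h := hreflm l m
    rw [hc1, hc2] at h
    calc _ = r (l - m) * (km l ⊗ₖ (1 : Matrix (Fin 2) (Fin 2) A))
          * ((1 : Matrix (Fin 2) (Fin 2) A) ⊗ₖ km m)
      - (km l ⊗ₖ (1 : Matrix (Fin 2) (Fin 2) A))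
          * ((1 : Matrix (Fin 2) (Fin 2) A) ⊗ₖ km m) * (- r (m - l))
      + (km l ⊗ₖ (1 : Matrix (Fin 2) (Fin 2) A)) * (- r (-l - m))
          * ((1 : Matrix (Fin 2) (Fin 2) A) ⊗ₖ km m)
      - ((1 : Matrix (Fin 2) (Fin 2) A) ⊗ₖ km m) * r (l + m)
          * (km l ⊗ₖ (1 : Matrix (Fin 2) (Fin 2) A)) := by noncomm_ring
      _ = 0 := h
  simp only [drt_matPB_mul_left pb hal hll, drt_matPB_mul_right pb har hlr, hIL, hIR,
    z1, z2, z3, z4, z5, z6, z7, z8, z9, z10, z11, z12,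
    mul_zero, zero_mul, add_zero, zero_add, neg_zero]
  simp only [hS1, hS2, hS3, hS4]
  have ca1 : ∀ x : Matrix (Fin 2) (Fin 2) A, L (-l) * (Linv (-l) * x) = x := fun x => by
    rw [← Matrix.mul_assoc, hl1, Matrix.one_mul]
  have ca2 : ∀ x : Matrix (Fin 2) (Fin 2) A, Linv (-l) * (L (-l) * x) = x := fun x => by
    rw [← Matrix.mul_assoc, hl2, Matrix.one_mul]
  have cb1 : ∀ x : Matrix (Fin 2) (Fin 2) A, L (-m) * (Linv (-m) * x) = x := fun x => by
    rw [← Matrix.mul_assoc, hm1, Matrix.one_mul]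
  have cb2 : ∀ x : Matrix (Fin 2) (Fin 2) A, Linv (-m) * (L (-m) * x) = x := fun x => by
    rw [← Matrix.mul_assoc, hm2, Matrix.one_mul]
  have hs : -((kp l ⊗ₖ (1 : Matrix (Fin 2) (Fin 2) A)) *
        (((1 : Matrix (Fin 2) (Fin 2) A) ⊗ₖ kp m) *
          ((L l ⊗ₖ L m) * ((r (l - m) * ((km l ⊗ₖ (1 : Matrix (Fin 2) (Fin 2) A))
          * ((1 : Matrix (Fin 2) (Fin 2) A) ⊗ₖ km m))
      + ((km l ⊗ₖ (1 : Matrix (Fin 2) (Fin 2) A))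
          * ((1 : Matrix (Fin 2) (Fin 2) A) ⊗ₖ km m)) * r (m - l)
      - (km l ⊗ₖ (1 : Matrix (Fin 2) (Fin 2) A))
          * (r (-l - m) * ((1 : Matrix (Fin 2) (Fin 2) A) ⊗ₖ km m))
      - ((1 : Matrix (Fin 2) (Fin 2) A) ⊗ₖ km m)
          * (r (l + m) * (km l ⊗ₖ (1 : Matrix (Fin 2) (Fin 2) A)))) * (Linv (-l) ⊗ₖ Linv (-m))))))
      = (0 : Matrix (Fin 2 × Fin 2) (Fin 2 × Fin 2) A) := by
    rw [hW]; simp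
  rw [← sub_eq_zero, ← hs]
  simp only [mul_add, add_mul, mul_sub, sub_mul, neg_mul, mul_neg, neg_neg,
    mul_one, one_mul, mul_assoc, drt_kron_mul_assoc, ← Matrix.mul_kronecker_mul,
    Matrix.one_kronecker_one, hl1, hl2, hm1, hm2, ca1, ca2, cb1, cb2]
  abel

/-- Poisson commutativity of the double-row transfer matrix
    𝔟(λ) = tr(k⁺(λ) L(λ) k⁻(λ) L(−λ)⁻¹). -/
theorem doubleRow_transfer_Poisson_commute
    (pb : A → A → A)
    -- Poisson algebra structure (biderivation, antisymmetric)
    (hal : ∀ a b c : A, pb (a + b) c = pb a c + pb b c)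
    (har : ∀ a b c : A, pb a (b + c) = pb a b + pb a c)
    (hll : ∀ a b c : A, pb (a * b) c = pb a c * b + a * pb b c)
    (hlr : ∀ a b c : A, pb a (b * c) = pb a b * c + b * pb a c)
    (hanti : ∀ a b : A, pb a b = - pb b a)
    -- the r-matrix: skew-symmetric and solution of the classical Yang–Baxter equation
    (r : ℝ → Matrix (Fin 2 × Fin 2) (Fin 2 × Fin 2) A)
    (hskew : ∀ l : ℝ, r l = - (PswapA * r (-l) * PswapA))
    (hCYBE : ∀ l m n : ℝ,
      (emb13 (r (l - n)) * emb23 (r (m - n)) - emb23 (r (m - n)) * emb13 (r (l - n)))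
      + (emb12 (r (l - m)) * emb13 (r (l - n)) - emb13 (r (l - n)) * emb12 (r (l - m)))
      + (emb12 (r (l - m)) * emb23 (r (m - n)) - emb23 (r (m - n)) * emb12 (r (l - m))) = 0)
    -- the monodromy matrix, invertible, satisfying the Sklyanin quadratic algebra
    (L Linv : ℝ → Matrix (Fin 2) (Fin 2) A)
    (hinv : ∀ l, L l * Linv l = 1 ∧ Linv l * L l = 1)
    (hSk : ∀ l m : ℝ, matPB pb (L l) (L m)
        = r (l - m) * ((L l ⊗ₖ (1 : Matrix (Fin 2) (Fin 2) A))
            * ((1 : Matrix (Fin 2) (Fin 2) A) ⊗ₖ L m))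
          - ((L l ⊗ₖ (1 : Matrix (Fin 2) (Fin 2) A))
            * ((1 : Matrix (Fin 2) (Fin 2) A) ⊗ₖ L m)) * r (l - m))
    -- the constant boundary matrices: Poisson commuting among themselves and with L
    (kp km : ℝ → Matrix (Fin 2) (Fin 2) A)
    (hkmkm : ∀ l m : ℝ, matPB pb (km l) (km m) = 0)
    (hkpkp : ∀ l m : ℝ, matPB pb (kp l) (kp m) = 0)
    (hkmkp : ∀ l m : ℝ, matPB pb (km l) (kp m) = 0)
    (hkmL : ∀ l m : ℝ, matPB pb (km l) (L m) = 0)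
    (hkpL : ∀ l m : ℝ, matPB pb (kp l) (L m) = 0)
    -- the classical reflection equations for k⁻ and k⁺
    (hreflm : ∀ l m : ℝ,
      r (l - m) * (km l ⊗ₖ (1 : Matrix (Fin 2) (Fin 2) A))
          * ((1 : Matrix (Fin 2) (Fin 2) A) ⊗ₖ km m)
      - (km l ⊗ₖ (1 : Matrix (Fin 2) (Fin 2) A))
          * ((1 : Matrix (Fin 2) (Fin 2) A) ⊗ₖ km m) * (PswapA * r (l - m) * PswapA)
      + (km l ⊗ₖ (1 : Matrix (Fin 2) (Fin 2) A)) * (PswapA * r (l + m) * PswapA)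
          * ((1 : Matrix (Fin 2) (Fin 2) A) ⊗ₖ km m)
      - ((1 : Matrix (Fin 2) (Fin 2) A) ⊗ₖ km m) * r (l + m)
          * (km l ⊗ₖ (1 : Matrix (Fin 2) (Fin 2) A)) = 0)
    (hreflp : ∀ l m : ℝ,
      (PswapA * r (l - m) * PswapA) * (kp l ⊗ₖ (1 : Matrix (Fin 2) (Fin 2) A))
          * ((1 : Matrix (Fin 2) (Fin 2) A) ⊗ₖ kp m)
      - (kp l ⊗ₖ (1 : Matrix (Fin 2) (Fin 2) A))
          * ((1 : Matrix (Fin 2) (Fin 2) A) ⊗ₖ kp m) * r (l - m)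
      + (kp l ⊗ₖ (1 : Matrix (Fin 2) (Fin 2) A)) * r (l + m)
          * ((1 : Matrix (Fin 2) (Fin 2) A) ⊗ₖ kp m)
      - ((1 : Matrix (Fin 2) (Fin 2) A) ⊗ₖ kp m) * (PswapA * r (l + m) * PswapA)
          * (kp l ⊗ₖ (1 : Matrix (Fin 2) (Fin 2) A)) = 0) :
    ∀ l m : ℝ,
      pb (Matrix.trace (kp l * L l * km l * Linv (-l)))
         (Matrix.trace (kp m * L m * km m * Linv (-m))) = 0 := by
  intro l m
  have hc1 : PswapA * r (l - m) * PswapA = - r (m - l) :=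
    drt_skew_conj r hskew (l - m) (m - l) (by ring)
  have hc2 : PswapA * r (l + m) * PswapA = - r (-l - m) :=
    drt_skew_conj r hskew (l + m) (-l - m) (by ring)
  rw [show kp l * L l * km l * Linv (-l) = kp l * (L l * (km l * Linv (-l))) from by
        rw [Matrix.mul_assoc, Matrix.mul_assoc],
      show kp m * L m * km m * Linv (-m) = kp m * (L m * (km m * Linv (-m))) from by
        rw [Matrix.mul_assoc, Matrix.mul_assoc]]
  rw [drt_pb_trace pb hal har]
  rw [drt_core pb hal har hll hlr hanti r hskew L Linv hinv hSk kp km hkmkm hkpkp hkmkp hkmL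
      hkpL hreflm l m]
  simp only [Matrix.mul_add, Matrix.mul_sub, Matrix.trace_add, Matrix.trace_sub]
  have e1 : Matrix.trace ((kp l ⊗ₖ (1 : Matrix (Fin 2) (Fin 2) A)) * (((1 : Matrix (Fin 2) (Fin 2) A) ⊗ₖ kp m) * (r (l - m) * (((L l * (km l * Linv (-l))) ⊗ₖ (1 : Matrix (Fin 2) (Fin 2) A)) * ((1 : Matrix (Fin 2) (Fin 2) A) ⊗ₖ (L m * (km m * Linv (-m))))))))
      = Matrix.trace (((kp l ⊗ₖ (1 : Matrix (Fin 2) (Fin 2) A)) * (((1 : Matrix (Fin 2) (Fin 2) A) ⊗ₖ kp m) * r (l - m))) * (((L l * (km l * Linv (-l))) ⊗ₖ (1 : Matrix (Fin 2) (Fin 2) A)) * ((1 : Matrix (Fin 2) (Fin 2) A) ⊗ₖ (L m * (km m * Linv (-m)))))) := by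
    rw [show (kp l ⊗ₖ (1 : Matrix (Fin 2) (Fin 2) A)) * (((1 : Matrix (Fin 2) (Fin 2) A) ⊗ₖ kp m) * (r (l - m) * (((L l * (km l * Linv (-l))) ⊗ₖ (1 : Matrix (Fin 2) (Fin 2) A)) * ((1 : Matrix (Fin 2) (Fin 2) A) ⊗ₖ (L m * (km m * Linv (-m)))))))
        = ((kp l ⊗ₖ (1 : Matrix (Fin 2) (Fin 2) A)) * (((1 : Matrix (Fin 2) (Fin 2) A) ⊗ₖ kp m) * r (l - m))) * (((L l * (km l * Linv (-l))) ⊗ₖ (1 : Matrix (Fin 2) (Fin 2) A)) * ((1 : Matrix (Fin 2) (Fin 2) A) ⊗ₖ (L m * (km m * Linv (-m))))) by noncomm_ring]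
  have e2 : Matrix.trace ((kp l ⊗ₖ (1 : Matrix (Fin 2) (Fin 2) A)) * (((1 : Matrix (Fin 2) (Fin 2) A) ⊗ₖ kp m) * (((L l * (km l * Linv (-l))) ⊗ₖ (1 : Matrix (Fin 2) (Fin 2) A)) * ((1 : Matrix (Fin 2) (Fin 2) A) ⊗ₖ (L m * (km m * Linv (-m)))) * r (m - l))))
      = Matrix.trace ((r (m - l) * ((kp l ⊗ₖ (1 : Matrix (Fin 2) (Fin 2) A)) * ((1 : Matrix (Fin 2) (Fin 2) A) ⊗ₖ kp m))) * (((L l * (km l * Linv (-l))) ⊗ₖ (1 : Matrix (Fin 2) (Fin 2) A)) * ((1 : Matrix (Fin 2) (Fin 2) A) ⊗ₖ (L m * (km m * Linv (-m)))))) := by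
    rw [show (kp l ⊗ₖ (1 : Matrix (Fin 2) (Fin 2) A)) * (((1 : Matrix (Fin 2) (Fin 2) A) ⊗ₖ kp m) * (((L l * (km l * Linv (-l))) ⊗ₖ (1 : Matrix (Fin 2) (Fin 2) A)) * ((1 : Matrix (Fin 2) (Fin 2) A) ⊗ₖ (L m * (km m * Linv (-m)))) * r (m - l)))
        = ((kp l ⊗ₖ (1 : Matrix (Fin 2) (Fin 2) A)) * (((1 : Matrix (Fin 2) (Fin 2) A) ⊗ₖ kp m) * (((L l * (km l * Linv (-l))) ⊗ₖ (1 : Matrix (Fin 2) (Fin 2) A)) * ((1 : Matrix (Fin 2) (Fin 2) A) ⊗ₖ (L m * (km m * Linv (-m))))))) * r (m - l) by noncomm_ring,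
      Matrix.trace_mul_comm,
      show r (m - l) * ((kp l ⊗ₖ (1 : Matrix (Fin 2) (Fin 2) A)) * (((1 : Matrix (Fin 2) (Fin 2) A) ⊗ₖ kp m) * (((L l * (km l * Linv (-l))) ⊗ₖ (1 : Matrix (Fin 2) (Fin 2) A)) * ((1 : Matrix (Fin 2) (Fin 2) A) ⊗ₖ (L m * (km m * Linv (-m)))))))
        = (r (m - l) * ((kp l ⊗ₖ (1 : Matrix (Fin 2) (Fin 2) A)) * ((1 : Matrix (Fin 2) (Fin 2) A) ⊗ₖ kp m))) * (((L l * (km l * Linv (-l))) ⊗ₖ (1 : Matrix (Fin 2) (Fin 2) A)) * ((1 : Matrix (Fin 2) (Fin 2) A) ⊗ₖ (L m * (km m * Linv (-m))))) by noncomm_ring]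
  have e3 : Matrix.trace ((kp l ⊗ₖ (1 : Matrix (Fin 2) (Fin 2) A)) * (((1 : Matrix (Fin 2) (Fin 2) A) ⊗ₖ kp m) * (((L l * (km l * Linv (-l))) ⊗ₖ (1 : Matrix (Fin 2) (Fin 2) A)) * (r (-l - m) * ((1 : Matrix (Fin 2) (Fin 2) A) ⊗ₖ (L m * (km m * Linv (-m))))))))
      = Matrix.trace ((((1 : Matrix (Fin 2) (Fin 2) A) ⊗ₖ kp m) * (r (-l - m) * (kp l ⊗ₖ (1 : Matrix (Fin 2) (Fin 2) A)))) * (((L l * (km l * Linv (-l))) ⊗ₖ (1 : Matrix (Fin 2) (Fin 2) A)) * ((1 : Matrix (Fin 2) (Fin 2) A) ⊗ₖ (L m * (km m * Linv (-m)))))) := by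
    rw [show (kp l ⊗ₖ (1 : Matrix (Fin 2) (Fin 2) A)) * (((1 : Matrix (Fin 2) (Fin 2) A) ⊗ₖ kp m) * (((L l * (km l * Linv (-l))) ⊗ₖ (1 : Matrix (Fin 2) (Fin 2) A)) * (r (-l - m) * ((1 : Matrix (Fin 2) (Fin 2) A) ⊗ₖ (L m * (km m * Linv (-m)))))))
        = ((kp l ⊗ₖ (1 : Matrix (Fin 2) (Fin 2) A)) * (((1 : Matrix (Fin 2) (Fin 2) A) ⊗ₖ kp m) * (((L l * (km l * Linv (-l))) ⊗ₖ (1 : Matrix (Fin 2) (Fin 2) A)) * r (-l - m)))) * ((1 : Matrix (Fin 2) (Fin 2) A) ⊗ₖ (L m * (km m * Linv (-m)))) by noncomm_ring,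
      Matrix.trace_mul_comm,
      show ((1 : Matrix (Fin 2) (Fin 2) A) ⊗ₖ (L m * (km m * Linv (-m)))) * ((kp l ⊗ₖ (1 : Matrix (Fin 2) (Fin 2) A)) * (((1 : Matrix (Fin 2) (Fin 2) A) ⊗ₖ kp m) * (((L l * (km l * Linv (-l))) ⊗ₖ (1 : Matrix (Fin 2) (Fin 2) A)) * r (-l - m))))
        = (((1 : Matrix (Fin 2) (Fin 2) A) ⊗ₖ (L m * (km m * Linv (-m)))) * ((kp l ⊗ₖ (1 : Matrix (Fin 2) (Fin 2) A)) * (((1 : Matrix (Fin 2) (Fin 2) A) ⊗ₖ kp m) * ((L l * (km l * Linv (-l))) ⊗ₖ (1 : Matrix (Fin 2) (Fin 2) A))))) * r (-l - m) by noncomm_ring,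
      Matrix.trace_mul_comm,
      show (((1 : Matrix (Fin 2) (Fin 2) A) ⊗ₖ kp m) * (r (-l - m) * (kp l ⊗ₖ (1 : Matrix (Fin 2) (Fin 2) A)))) * (((L l * (km l * Linv (-l))) ⊗ₖ (1 : Matrix (Fin 2) (Fin 2) A)) * ((1 : Matrix (Fin 2) (Fin 2) A) ⊗ₖ (L m * (km m * Linv (-m)))))
        = ((1 : Matrix (Fin 2) (Fin 2) A) ⊗ₖ kp m) * (r (-l - m) * ((kp l ⊗ₖ (1 : Matrix (Fin 2) (Fin 2) A)) * (((L l * (km l * Linv (-l))) ⊗ₖ (1 : Matrix (Fin 2) (Fin 2) A)) * ((1 : Matrix (Fin 2) (Fin 2) A) ⊗ₖ (L m * (km m * Linv (-m))))))) by noncomm_ring,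
      Matrix.trace_mul_comm ((1 : Matrix (Fin 2) (Fin 2) A) ⊗ₖ kp m) (r (-l - m) * ((kp l ⊗ₖ (1 : Matrix (Fin 2) (Fin 2) A)) * (((L l * (km l * Linv (-l))) ⊗ₖ (1 : Matrix (Fin 2) (Fin 2) A)) * ((1 : Matrix (Fin 2) (Fin 2) A) ⊗ₖ (L m * (km m * Linv (-m))))))),
      show (r (-l - m) * ((kp l ⊗ₖ (1 : Matrix (Fin 2) (Fin 2) A)) * (((L l * (km l * Linv (-l))) ⊗ₖ (1 : Matrix (Fin 2) (Fin 2) A)) * ((1 : Matrix (Fin 2) (Fin 2) A) ⊗ₖ (L m * (km m * Linv (-m))))))) * ((1 : Matrix (Fin 2) (Fin 2) A) ⊗ₖ kp m)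
        = r (-l - m) * ((kp l ⊗ₖ (1 : Matrix (Fin 2) (Fin 2) A)) * (((L l * (km l * Linv (-l))) ⊗ₖ (1 : Matrix (Fin 2) (Fin 2) A)) * (((1 : Matrix (Fin 2) (Fin 2) A) ⊗ₖ (L m * (km m * Linv (-m)))) * ((1 : Matrix (Fin 2) (Fin 2) A) ⊗ₖ kp m)))) by noncomm_ring]
    congr 1
    simp only [drt_kron_mul_assoc, ← Matrix.mul_kronecker_mul, Matrix.mul_one, Matrix.one_mul, mul_one, one_mul, mul_assoc]
  have e4 : Matrix.trace ((kp l ⊗ₖ (1 : Matrix (Fin 2) (Fin 2) A)) * (((1 : Matrix (Fin 2) (Fin 2) A) ⊗ₖ kp m) * (((1 : Matrix (Fin 2) (Fin 2) A) ⊗ₖ (L m * (km m * Linv (-m)))) * (r (l + m) * ((L l * (km l * Linv (-l))) ⊗ₖ (1 : Matrix (Fin 2) (Fin 2) A))))))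
      = Matrix.trace (((kp l ⊗ₖ (1 : Matrix (Fin 2) (Fin 2) A)) * (r (l + m) * ((1 : Matrix (Fin 2) (Fin 2) A) ⊗ₖ kp m))) * (((L l * (km l * Linv (-l))) ⊗ₖ (1 : Matrix (Fin 2) (Fin 2) A)) * ((1 : Matrix (Fin 2) (Fin 2) A) ⊗ₖ (L m * (km m * Linv (-m)))))) := by
    rw [show (kp l ⊗ₖ (1 : Matrix (Fin 2) (Fin 2) A)) * (((1 : Matrix (Fin 2) (Fin 2) A) ⊗ₖ kp m) * (((1 : Matrix (Fin 2) (Fin 2) A) ⊗ₖ (L m * (km m * Linv (-m)))) * (r (l + m) * ((L l * (km l * Linv (-l))) ⊗ₖ (1 : Matrix (Fin 2) (Fin 2) A)))))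
        = ((kp l ⊗ₖ (1 : Matrix (Fin 2) (Fin 2) A)) * (((1 : Matrix (Fin 2) (Fin 2) A) ⊗ₖ kp m) * (((1 : Matrix (Fin 2) (Fin 2) A) ⊗ₖ (L m * (km m * Linv (-m)))) * r (l + m)))) * ((L l * (km l * Linv (-l))) ⊗ₖ (1 : Matrix (Fin 2) (Fin 2) A)) by noncomm_ring,
      Matrix.trace_mul_comm,
      show ((L l * (km l * Linv (-l))) ⊗ₖ (1 : Matrix (Fin 2) (Fin 2) A)) * ((kp l ⊗ₖ (1 : Matrix (Fin 2) (Fin 2) A)) * (((1 : Matrix (Fin 2) (Fin 2) A) ⊗ₖ kp m) * (((1 : Matrix (Fin 2) (Fin 2) A) ⊗ₖ (L m * (km m * Linv (-m)))) * r (l + m))))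
        = (((L l * (km l * Linv (-l))) ⊗ₖ (1 : Matrix (Fin 2) (Fin 2) A)) * ((kp l ⊗ₖ (1 : Matrix (Fin 2) (Fin 2) A)) * (((1 : Matrix (Fin 2) (Fin 2) A) ⊗ₖ kp m) * ((1 : Matrix (Fin 2) (Fin 2) A) ⊗ₖ (L m * (km m * Linv (-m))))))) * r (l + m) by noncomm_ring,
      Matrix.trace_mul_comm,
      show ((kp l ⊗ₖ (1 : Matrix (Fin 2) (Fin 2) A)) * (r (l + m) * ((1 : Matrix (Fin 2) (Fin 2) A) ⊗ₖ kp m))) * (((L l * (km l * Linv (-l))) ⊗ₖ (1 : Matrix (Fin 2) (Fin 2) A)) * ((1 : Matrix (Fin 2) (Fin 2) A) ⊗ₖ (L m * (km m * Linv (-m)))))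
        = (kp l ⊗ₖ (1 : Matrix (Fin 2) (Fin 2) A)) * (r (l + m) * (((1 : Matrix (Fin 2) (Fin 2) A) ⊗ₖ kp m) * (((L l * (km l * Linv (-l))) ⊗ₖ (1 : Matrix (Fin 2) (Fin 2) A)) * ((1 : Matrix (Fin 2) (Fin 2) A) ⊗ₖ (L m * (km m * Linv (-m))))))) by noncomm_ring,
      Matrix.trace_mul_comm (kp l ⊗ₖ (1 : Matrix (Fin 2) (Fin 2) A)) (r (l + m) * (((1 : Matrix (Fin 2) (Fin 2) A) ⊗ₖ kp m) * (((L l * (km l * Linv (-l))) ⊗ₖ (1 : Matrix (Fin 2) (Fin 2) A)) * ((1 : Matrix (Fin 2) (Fin 2) A) ⊗ₖ (L m * (km m * Linv (-m))))))),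
      show (r (l + m) * (((1 : Matrix (Fin 2) (Fin 2) A) ⊗ₖ kp m) * (((L l * (km l * Linv (-l))) ⊗ₖ (1 : Matrix (Fin 2) (Fin 2) A)) * ((1 : Matrix (Fin 2) (Fin 2) A) ⊗ₖ (L m * (km m * Linv (-m))))))) * (kp l ⊗ₖ (1 : Matrix (Fin 2) (Fin 2) A))
        = r (l + m) * (((1 : Matrix (Fin 2) (Fin 2) A) ⊗ₖ kp m) * (((L l * (km l * Linv (-l))) ⊗ₖ (1 : Matrix (Fin 2) (Fin 2) A)) * (((1 : Matrix (Fin 2) (Fin 2) A) ⊗ₖ (L m * (km m * Linv (-m)))) * (kp l ⊗ₖ (1 : Matrix (Fin 2) (Fin 2) A))))) by noncomm_ring]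
    congr 1
    simp only [drt_kron_mul_assoc, ← Matrix.mul_kronecker_mul, Matrix.mul_one, Matrix.one_mul, mul_one, one_mul, mul_assoc]
  rw [e1, e2, e3, e4]
  rw [← Matrix.trace_add, ← Matrix.trace_sub, ← Matrix.trace_sub]
  rw [show ((kp l ⊗ₖ (1 : Matrix (Fin 2) (Fin 2) A)) * (((1 : Matrix (Fin 2) (Fin 2) A) ⊗ₖ kp m) * r (l - m))) * (((L l * (km l * Linv (-l))) ⊗ₖ (1 : Matrix (Fin 2) (Fin 2) A)) * ((1 : Matrix (Fin 2) (Fin 2) A) ⊗ₖ (L m * (km m * Linv (-m))))) + (r (m - l) * ((kp l ⊗ₖ (1 : Matrix (Fin 2) (Fin 2) A)) * ((1 : Matrix (Fin 2) (Fin 2) A) ⊗ₖ kp m))) * (((L l * (km l * Linv (-l))) ⊗ₖ (1 : Matrix (Fin 2) (Fin 2) A)) * ((1 : Matrix (Fin 2) (Fin 2) A) ⊗ₖ (L m * (km m * Linv (-m)))))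
        - (((1 : Matrix (Fin 2) (Fin 2) A) ⊗ₖ kp m) * (r (-l - m) * (kp l ⊗ₖ (1 : Matrix (Fin 2) (Fin 2) A)))) * (((L l * (km l * Linv (-l))) ⊗ₖ (1 : Matrix (Fin 2) (Fin 2) A)) * ((1 : Matrix (Fin 2) (Fin 2) A) ⊗ₖ (L m * (km m * Linv (-m))))) - ((kp l ⊗ₖ (1 : Matrix (Fin 2) (Fin 2) A)) * (r (l + m) * ((1 : Matrix (Fin 2) (Fin 2) A) ⊗ₖ kp m))) * (((L l * (km l * Linv (-l))) ⊗ₖ (1 : Matrix (Fin 2) (Fin 2) A)) * ((1 : Matrix (Fin 2) (Fin 2) A) ⊗ₖ (L m * (km m * Linv (-m)))))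
      = ((kp l ⊗ₖ (1 : Matrix (Fin 2) (Fin 2) A)) * (((1 : Matrix (Fin 2) (Fin 2) A) ⊗ₖ kp m) * r (l - m)) + r (m - l) * ((kp l ⊗ₖ (1 : Matrix (Fin 2) (Fin 2) A)) * ((1 : Matrix (Fin 2) (Fin 2) A) ⊗ₖ kp m)) - ((1 : Matrix (Fin 2) (Fin 2) A) ⊗ₖ kp m) * (r (-l - m) * (kp l ⊗ₖ (1 : Matrix (Fin 2) (Fin 2) A)))
          - (kp l ⊗ₖ (1 : Matrix (Fin 2) (Fin 2) A)) * (r (l + m) * ((1 : Matrix (Fin 2) (Fin 2) A) ⊗ₖ kp m))) * (((L l * (km l * Linv (-l))) ⊗ₖ (1 : Matrix (Fin 2) (Fin 2) A)) * ((1 : Matrix (Fin 2) (Fin 2) A) ⊗ₖ (L m * (km m * Linv (-m))))) by noncomm_ring]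
  have hZ : (kp l ⊗ₖ (1 : Matrix (Fin 2) (Fin 2) A)) * (((1 : Matrix (Fin 2) (Fin 2) A) ⊗ₖ kp m) * r (l - m)) + r (m - l) * ((kp l ⊗ₖ (1 : Matrix (Fin 2) (Fin 2) A)) * ((1 : Matrix (Fin 2) (Fin 2) A) ⊗ₖ kp m)) - ((1 : Matrix (Fin 2) (Fin 2) A) ⊗ₖ kp m) * (r (-l - m) * (kp l ⊗ₖ (1 : Matrix (Fin 2) (Fin 2) A)))
      - (kp l ⊗ₖ (1 : Matrix (Fin 2) (Fin 2) A)) * (r (l + m) * ((1 : Matrix (Fin 2) (Fin 2) A) ⊗ₖ kp m)) = 0 := by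
    have h := hreflp l m
    rw [hc1, hc2] at h
    calc (kp l ⊗ₖ (1 : Matrix (Fin 2) (Fin 2) A)) * (((1 : Matrix (Fin 2) (Fin 2) A) ⊗ₖ kp m) * r (l - m)) + r (m - l) * ((kp l ⊗ₖ (1 : Matrix (Fin 2) (Fin 2) A)) * ((1 : Matrix (Fin 2) (Fin 2) A) ⊗ₖ kp m)) - ((1 : Matrix (Fin 2) (Fin 2) A) ⊗ₖ kp m) * (r (-l - m) * (kp l ⊗ₖ (1 : Matrix (Fin 2) (Fin 2) A)))
          - (kp l ⊗ₖ (1 : Matrix (Fin 2) (Fin 2) A)) * (r (l + m) * ((1 : Matrix (Fin 2) (Fin 2) A) ⊗ₖ kp m))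
        = -((- r (m - l)) * (kp l ⊗ₖ (1 : Matrix (Fin 2) (Fin 2) A)) * ((1 : Matrix (Fin 2) (Fin 2) A) ⊗ₖ kp m) - (kp l ⊗ₖ (1 : Matrix (Fin 2) (Fin 2) A)) * ((1 : Matrix (Fin 2) (Fin 2) A) ⊗ₖ kp m) * r (l - m) + (kp l ⊗ₖ (1 : Matrix (Fin 2) (Fin 2) A)) * r (l + m) * ((1 : Matrix (Fin 2) (Fin 2) A) ⊗ₖ kp m)
            - ((1 : Matrix (Fin 2) (Fin 2) A) ⊗ₖ kp m) * (- r (-l - m)) * (kp l ⊗ₖ (1 : Matrix (Fin 2) (Fin 2) A))) := by noncomm_ring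
      _ = 0 := by rw [h, neg_zero]
  rw [hZ, Matrix.zero_mul, Matrix.trace_zero]


end
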